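/- There exists ε₀ > 0 such that for all 0 < ε ≤ ε₀, if λ ∈ [0,∞) and u ∈ C²([0,1]) is a nonzero solution of φ₂u'' + φ₁u' = λu on [0,1], and u_L denotes the restriction of u to [0,ε], then sin(√(6λ)·(1−2ε))·(u_L'(ε)² − 6λ·u_L(ε)²) + 2√(6λ)·cos(√(6λ)·(1−2ε))·u_L(ε)·u_L'(ε) = 0. -/

import Mathlib

open Real Set Filter Topology MeasureTheory

/-- The degenerate point `x₀ = (2 − √3)ε`. -/
noncomputable def x0 (ε : ℝ) : ℝ := (2 - Real.sqrt 3) * ε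

/-- Leading coefficient `φ₂` of `D_ε` on the interval. -/
noncomputable def phi2 (ε x : ℝ) : ℝ :=
  if x ≤ ε then (1/12) * (1 - 4*(x/ε) + (x/ε)^2)
  else if x ≤ 1 - ε then -(1/6)
  else (1/12) * (1 - 4*((1-x)/ε) + ((1-x)/ε)^2)

/-- First-order coefficient `φ₁` of `D_ε` on the interval. -/
noncomputable def phi1 (ε x : ℝ) : ℝ :=
  if x ≤ ε then -6 * (1 - x/ε) * ((1 + x/ε)^3)⁻¹
  else if x ≤ 1 - ε then 0
  else 6 * (1 - (1-x)/ε) * ((1 + (1-x)/ε)^3)⁻¹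

/-- Integration-factor function `g` on `[0, ε]`. -/
noncomputable def gfun (ε x : ℝ) : ℝ :=
  Real.sign (x - x0 ε) * |x - x0 ε| ^ ((4 + 2*Real.sqrt 3) * ε) *
    |x - 4*ε + x0 ε| ^ ((4 - 2*Real.sqrt 3) * ε) *
    (x + ε) ^ (-(8*ε)) *
    Real.exp (12*ε^3/(ε+x)^2 + 12*ε^2/(ε+x))

/-- Sturm–Liouville principal coefficient `p`. -/
noncomputable def pfun (ε x : ℝ) : ℝ :=
  if x ≤ ε then gfun ε x / (6 * gfun ε ε)
  else if x ≤ 1 - ε then 1/6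
  else gfun ε (1-x) / (6 * gfun ε ε)

/-- Sturm–Liouville weight `w = -p/φ₂`. -/
noncomputable def wfun (ε x : ℝ) : ℝ := -pfun ε x / phi2 ε x


noncomputable def Gaux (ε x : ℝ) : ℝ :=
  (x - x0 ε) ^ ((4 + 2*Real.sqrt 3) * ε) *
    Real.exp ((4 - 2*Real.sqrt 3) * ε * Real.log (4*ε - x0 ε - x)
      - 8*ε * Real.log (x + ε) + 12*ε^3/(ε+x)^2 + 12*ε^2/(ε+x))

lemma sqrt3_lt_two : Real.sqrt 3 < 2 := by
  nlinarith [Real.sq_sqrt (by norm_num : (0:ℝ) ≤ 3), Real.sqrt_nonneg 3]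

lemma one_lt_sqrt3 : 1 < Real.sqrt 3 := by
  nlinarith [Real.sq_sqrt (by norm_num : (0:ℝ) ≤ 3), Real.sqrt_nonneg 3]

lemma x0_pos {ε : ℝ} (hε : 0 < ε) : 0 < x0 ε := by
  have := sqrt3_lt_two; unfold x0; nlinarith

lemma x0_lt {ε : ℝ} (hε : 0 < ε) : x0 ε < ε := by
  have := one_lt_sqrt3; unfold x0; nlinarith

lemma gfun_eq_Gaux {ε x : ℝ} (hε : 0 < ε) (h1 : x0 ε < x) (h2 : x ≤ ε) :
    gfun ε x = Gaux ε x := by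
  have hs := one_lt_sqrt3
  have hx0 : 0 < x - x0 ε := by linarith
  have hneg : x - 4*ε + x0 ε < 0 := by
    have : x0 ε < ε := x0_lt hε; unfold x0 at *; nlinarith
  have habs : |x - 4*ε + x0 ε| = 4*ε - x0 ε - x := by rw [abs_of_neg hneg]; ring
  have hpos2 : (0:ℝ) < 4*ε - x0 ε - x := by linarith
  have hpos3 : (0:ℝ) < x + ε := by have := x0_pos hε; linarith
  unfold gfun Gaux
  rw [Real.sign_of_pos hx0, habs, abs_of_pos hx0,
    Real.rpow_def_of_pos hpos2, Real.rpow_def_of_pos hpos3]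
  simp only [mul_assoc, ← Real.exp_add]
  ring_nf

noncomputable def Lfun (ε x : ℝ) : ℝ :=
  (4+2*Real.sqrt 3)*ε/(x - x0 ε) + (4-2*Real.sqrt 3)*ε/(x - 4*ε + x0 ε)
    - 8*ε/(x+ε) - 24*ε^3/(ε+x)^3 - 12*ε^2/(ε+x)^2

set_option maxHeartbeats 2000000 in
lemma Gaux_hasDerivAt {ε x : ℝ} (hε : 0 < ε) (h1 : x0 ε < x) (h2 : x ≤ ε) :
    HasDerivAt (Gaux ε) (Gaux ε x * Lfun ε x) x := by
  have hs := one_lt_sqrt3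
  have hx0 : 0 < x - x0 ε := by linarith
  have hneg : x - 4*ε + x0 ε < 0 := by
    have : x0 ε < ε := x0_lt hε; unfold x0 at *; nlinarith
  have hpos2 : (0:ℝ) < 4*ε - x0 ε - x := by linarith
  have hpos3 : (0:ℝ) < x + ε := by have := x0_pos hε; linarith
  have hpos3' : (0:ℝ) < ε + x := by linarith
  set a := (4 + 2*Real.sqrt 3) * ε with ha
  set b := (4 - 2*Real.sqrt 3) * ε with hb
  -- first factor
  have d0 : HasDerivAt (fun y : ℝ => y - x0 ε) 1 x := (hasDerivAt_id x).sub_const _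
  have D1 : HasDerivAt (fun y : ℝ => (y - x0 ε) ^ a) (1 * a * (x - x0 ε) ^ (a - 1)) x :=
    d0.rpow_const (Or.inl hx0.ne')
  -- log pieces
  have dlin1 : HasDerivAt (fun y : ℝ => 4*ε - x0 ε - y) (-1) x := by
    simpa using (hasDerivAt_id x).const_sub (4*ε - x0 ε)
  have dlog1 : HasDerivAt (fun y : ℝ => Real.log (4*ε - x0 ε - y)) ((4*ε - x0 ε - x)⁻¹ * (-1)) x :=
    (Real.hasDerivAt_log hpos2.ne').comp x dlin1
  have dlin2 : HasDerivAt (fun y : ℝ => y + ε) 1 x := (hasDerivAt_id x).add_const _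
  have dlog2 : HasDerivAt (fun y : ℝ => Real.log (y + ε)) ((x + ε)⁻¹ * 1) x :=
    by convert dlin2.log hpos3.ne' using 1; ring
  have dlin3 : HasDerivAt (fun y : ℝ => ε + y) 1 x := by
    simpa using (hasDerivAt_id x).const_add ε
  have dp2 : HasDerivAt (fun y : ℝ => (ε + y)^2) ((2:ℕ) * (ε + x)^(2-1) * 1) x := dlin3.pow 2
  have dp3 : HasDerivAt (fun y : ℝ => (ε + y)^3) ((3:ℕ) * (ε + x)^(3-1) * 1) x := dlin3.pow 3
  have dq2 : HasDerivAt (fun y : ℝ => 12*ε^3/(ε+y)^2)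
      ((0 * (ε+x)^2 - 12*ε^3 * ((2:ℕ) * (ε + x)^(2-1) * 1)) / ((ε+x)^2)^2) x :=
    (hasDerivAt_const x (12*ε^3)).div dp2 (by positivity)
  have dq1 : HasDerivAt (fun y : ℝ => 12*ε^2/(ε+y))
      ((0 * (ε+x) - 12*ε^2 * 1) / (ε+x)^2) x :=
    (hasDerivAt_const x (12*ε^2)).div dlin3 hpos3'.ne'
  have Dinner : HasDerivAt (fun y : ℝ =>
      b * Real.log (4*ε - x0 ε - y) - 8*ε * Real.log (y + ε)
        + 12*ε^3/(ε+y)^2 + 12*ε^2/(ε+y))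
      (b * ((4*ε - x0 ε - x)⁻¹ * (-1)) - 8*ε * ((x + ε)⁻¹ * 1)
        + (0 * (ε+x)^2 - 12*ε^3 * ((2:ℕ) * (ε + x)^(2-1) * 1)) / ((ε+x)^2)^2
        + (0 * (ε+x) - 12*ε^2 * 1) / (ε+x)^2) x :=
    (((dlog1.const_mul b).sub (dlog2.const_mul (8*ε))).add dq2).add dq1
  have DExp := Dinner.exp
  have D := D1.mul DExp
  have hu1 : x - x0 ε ≠ 0 := hx0.ne'
  have hu2 : x - 4*ε + x0 ε ≠ 0 := hneg.ne
  have hu3 : x + ε ≠ 0 := hpos3.ne'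
  have hu4 : (4*ε - x0 ε - x) ≠ 0 := hpos2.ne'
  have hu5 : ε + x ≠ 0 := hpos3'.ne'
  have hsum : Lfun ε x = a / (x - x0 ε) +
      (b * ((4*ε - x0 ε - x)⁻¹ * (-1)) - 8*ε * ((x + ε)⁻¹ * 1)
        + (0 * (ε+x)^2 - 12*ε^3 * ((2:ℕ) * (ε + x)^(2-1) * 1)) / ((ε+x)^2)^2
        + (0 * (ε+x) - 12*ε^2 * 1) / (ε+x)^2) := by
    unfold Lfun
    rw [← ha, ← hb]
    field_simp
    ring
  refine D.congr_deriv ?_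
  rw [hsum]
  unfold Gaux
  rw [← ha, ← hb, Real.rpow_sub_one hx0.ne']
  ring

lemma key_poly (ε x s : ℝ) (hs : s^2 = 3) (hε : ε ≠ 0)
    (h1 : x - (2-s)*ε ≠ 0) (h2 : x - 4*ε + (2-s)*ε ≠ 0) (h3 : x + ε ≠ 0) :
    ((1:ℝ)/12) * (1 - 4*(x/ε) + (x/ε)^2) *
      ((4+2*s)*ε/(x - (2-s)*ε) + (4-2*s)*ε/(x - 4*ε + (2-s)*ε)
        - 8*ε/(x+ε) - 24*ε^3/(ε+x)^3 - 12*ε^2/(ε+x)^2)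
    = -6 * (1 - x/ε) * ((1 + x/ε)^3)⁻¹ := by
  have h3' : ε + x ≠ 0 := by intro h; apply h3; linarith
  have h4 : 1 + x/ε ≠ 0 := by
    intro h; apply h3'
    field_simp at h
    linarith
  have h1' : x - ε*(2-s) ≠ 0 := by rwa [mul_comm]
  have h2' : x - 4*ε + ε*(2-s) ≠ 0 := by intro h; apply h2; linarith
  field_simp
  ring_nf
  rw [hs]
  ring

lemma phi2_mul_Lfun {ε x : ℝ} (hε : 0 < ε) (h1 : x0 ε < x) (h2 : x ≤ ε) :
    phi2 ε x * Lfun ε x = phi1 ε x := by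
  have hs : Real.sqrt 3 ^ 2 = 3 := Real.sq_sqrt (by norm_num)
  have hs1 := one_lt_sqrt3
  have hx0 : 0 < x - x0 ε := by linarith
  have hneg : x - 4*ε + x0 ε < 0 := by
    have := x0_lt hε; unfold x0 at *; nlinarith
  have hpos3 : (0:ℝ) < x + ε := by have := x0_pos hε; linarith
  unfold phi2 phi1 Lfun x0 at *
  rw [if_pos h2, if_pos h2]
  exact key_poly ε x _ hs hε.ne' hx0.ne' hneg.ne hpos3.ne'

lemma phi2_neg {ε x : ℝ} (hε : 0 < ε) (h1 : x0 ε < x) (h2 : x ≤ ε) :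
    phi2 ε x < 0 := by
  have hs : Real.sqrt 3 ^ 2 = 3 := Real.sq_sqrt (by norm_num)
  have hs1 := one_lt_sqrt3
  have hx0 : 0 < x - x0 ε := by linarith
  have hneg : x - 4*ε + x0 ε < 0 := by
    have := x0_lt hε; unfold x0 at *; nlinarith
  have heq : phi2 ε x = (x - x0 ε) * (x - 4*ε + x0 ε) / (12*ε^2) := by
    unfold phi2 x0 at *
    rw [if_pos h2]
    field_simp
    ring_nf
    rw [hs]
    ring
  rw [heq]
  apply div_neg_of_neg_of_pos (mul_neg_of_pos_of_neg hx0 hneg) (by positivity)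

lemma phi2_symm {ε x : ℝ} (hε : 0 < ε) (hε2 : ε < 1/2) (hx2 : x ≤ ε) :
    phi2 ε (1 - x) = phi2 ε x := by
  unfold phi2
  rw [if_pos hx2]
  rcases lt_or_eq_of_le hx2 with h | h
  · rw [if_neg (by linarith), if_neg (by linarith)]
    have e : (1:ℝ) - (1 - x) = x := by ring
    rw [e]
  · subst h
    rw [if_neg (by linarith), if_pos (by linarith)]
    rw [div_self hε.ne']
    norm_num

lemma phi1_symm {ε x : ℝ} (hε : 0 < ε) (hε2 : ε < 1/2) (hx2 : x ≤ ε) :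
    phi1 ε (1 - x) = -phi1 ε x := by
  unfold phi1
  rw [if_pos hx2]
  rcases lt_or_eq_of_le hx2 with h | h
  · rw [if_neg (by linarith), if_neg (by linarith)]
    have e : (1:ℝ) - (1 - x) = x := by ring
    rw [e]
    ring
  · subst h
    rw [if_neg (by linarith), if_pos (by linarith)]
    rw [div_self hε.ne']
    norm_num

lemma phi2_mid {ε x : ℝ} (hε : 0 < ε) (hx1 : ε ≤ x) (hx2 : x ≤ 1 - ε) :
    phi2 ε x = -(1/6) := by
  unfold phi2
  by_cases h : x ≤ ε
  · have : x = ε := le_antisymm h hx1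
    subst this
    rw [if_pos le_rfl, div_self hε.ne']
    norm_num
  · rw [if_neg h, if_pos hx2]

lemma phi1_mid {ε x : ℝ} (hε : 0 < ε) (hx1 : ε ≤ x) (hx2 : x ≤ 1 - ε) :
    phi1 ε x = 0 := by
  unfold phi1
  by_cases h : x ≤ ε
  · have : x = ε := le_antisymm h hx1
    subst this
    rw [if_pos le_rfl, div_self hε.ne']
    norm_num
  · rw [if_neg h, if_pos hx2]

lemma Gaux_pos {ε x : ℝ} (hε : 0 < ε) (h1 : x0 ε < x) : 0 < Gaux ε x := by
  have hx0 : 0 < x - x0 ε := by linarith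
  unfold Gaux
  positivity

lemma gfun_eps_pos {ε : ℝ} (hε : 0 < ε) : 0 < gfun ε ε := by
  rw [gfun_eq_Gaux hε (x0_lt hε) le_rfl]
  exact Gaux_pos hε (x0_lt hε)

lemma pfun_hasDerivAt {ε x : ℝ} (hε : 0 < ε) (h1 : x0 ε < x) (h2 : x < ε) :
    HasDerivAt (pfun ε) (pfun ε x * Lfun ε x) x := by
  have heq : (fun y => Gaux ε y / (6 * gfun ε ε)) =ᶠ[nhds x] pfun ε := by
    filter_upwards [Ioo_mem_nhds h1 h2] with y hy
    unfold pfun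
    rw [if_pos hy.2.le, gfun_eq_Gaux hε hy.1 hy.2.le]
  have D := (Gaux_hasDerivAt hε h1 h2.le).div_const (6 * gfun ε ε)
  have hpx : pfun ε x = Gaux ε x / (6 * gfun ε ε) := by
    unfold pfun
    rw [if_pos h2.le, gfun_eq_Gaux hε h1 h2.le]
  have := D.congr_of_eventuallyEq heq.symm
  refine this.congr_deriv ?_
  rw [hpx]
  ring

lemma pfun_eps {ε : ℝ} (hε : 0 < ε) : pfun ε ε = 1/6 := by
  unfold pfun
  rw [if_pos le_rfl, div_eq_iff (by have := gfun_eps_pos hε; positivity)]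
  field_simp [(gfun_eps_pos hε).ne']

lemma wronskian_eq_zero {ε : ℝ} (hε : 0 < ε) (hε2 : ε < 1/2) (lam : ℝ)
    (u u' u'' : ℝ → ℝ)
    (hu : ∀ x ∈ Set.Icc (0:ℝ) 1, HasDerivAt u (u' x) x)
    (hu' : ∀ x ∈ Set.Icc (0:ℝ) 1, HasDerivAt u' (u'' x) x)
    (heq : ∀ x ∈ Set.Icc (0:ℝ) 1, phi2 ε x * u'' x + phi1 ε x * u' x = lam * u x) :
    u ε * u' (1-ε) + u' ε * u (1-ε) = 0 := by
  have hx0p := x0_pos hε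
  have hx0l := x0_lt hε
  set W : ℝ → ℝ := fun y => u y * (-(u' (1-y))) - u' y * u (1-y) with hW
  set F : ℝ → ℝ := fun y => pfun ε y * W y with hF
  have hmem : ∀ y : ℝ, x0 ε ≤ y → y ≤ ε → y ∈ Set.Icc (0:ℝ) 1 := fun y hy1 hy2 =>
    ⟨by linarith, by linarith⟩
  have hmem' : ∀ y : ℝ, x0 ε ≤ y → y ≤ ε → (1-y) ∈ Set.Icc (0:ℝ) 1 := fun y hy1 hy2 =>
    ⟨by linarith, by linarith⟩
  have hdW : ∀ y, x0 ε ≤ y → y ≤ ε →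
      HasDerivAt W (u y * u'' (1-y) - u'' y * u (1-y)) y := by
    intro y hy1 hy2
    have hy := hmem y hy1 hy2
    have hy' := hmem' y hy1 hy2
    have dlin : HasDerivAt (fun z : ℝ => 1 - z) (-1) y := by
      simpa using (hasDerivAt_id y).const_sub 1
    have dv : HasDerivAt (fun z => u (1-z)) (-(u' (1-y))) y := by
      have := (hu (1-y) hy').comp y dlin
      exact this.congr_deriv (by ring)
    have dvd : HasDerivAt (fun z => -(u' (1-z))) (u'' (1-y)) y := by
      have := ((hu' (1-y) hy').comp y dlin).neg
      exact this.congr_deriv (by ring)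
    have := ((hu y hy).mul dvd).sub ((hu' y hy).mul dv)
    refine this.congr_deriv ?_
    ring
  have hdF : ∀ y ∈ Set.Ioo (x0 ε) ε, HasDerivAt F 0 y := by
    intro y hy
    obtain ⟨hy1, hy2⟩ := hy
    have hymem := hmem y hy1.le hy2.le
    have hymem' := hmem' y hy1.le hy2.le
    have hphi2 := (phi2_neg hε hy1 hy2.le).ne
    have e1 := heq y hymem
    have e2' := heq (1-y) hymem'
    rw [phi2_symm hε hε2 hy2.le, phi1_symm hε hε2 hy2.le] at e2'
    have hL := phi2_mul_Lfun hε hy1 hy2.le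
    have key : Lfun ε y * W y + (u y * u'' (1-y) - u'' y * u (1-y)) = 0 := by
      have hm : phi2 ε y * (Lfun ε y * W y + (u y * u'' (1-y) - u'' y * u (1-y))) = 0 := by
        simp only [hW]
        linear_combination (u y * (-(u' (1-y))) - u' y * u (1-y)) * hL + u y * e2' - u (1-y) * e1
      exact (mul_eq_zero.mp hm).resolve_left hphi2
    have hD := (pfun_hasDerivAt hε hy1 hy2).mul (hdW y hy1.le hy2.le)
    refine hD.congr_deriv ?_
    linear_combination (pfun ε y) * key
  have hWcont : ∀ y, x0 ε ≤ y → y ≤ ε → ContinuousAt W y := fun y hy1 hy2 =>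
    (hdW y hy1 hy2).continuousAt
  have hconst : ∀ c ∈ Set.Ioo (x0 ε) ε, F ε = F c := by
    intro c hc
    have hcont : ContinuousOn F (Set.Icc c ε) := by
      refine ContinuousOn.congr (f := fun y => Gaux ε y / (6 * gfun ε ε) * W y) ?_ ?_
      · intro y hy
        have hy1 : x0 ε < y := lt_of_lt_of_le hc.1 hy.1
        exact ContinuousAt.continuousWithinAt
          (((Gaux_hasDerivAt hε hy1 hy.2).continuousAt.div_const _).mul (hWcont y hy1.le hy.2))
      · intro y hy
        have hy1 : x0 ε < y := lt_of_lt_of_le hc.1 hy.1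
        simp only [hF]
        unfold pfun
        rw [if_pos hy.2, gfun_eq_Gaux hε hy1 hy.2]
    have := constant_of_has_deriv_right_zero hcont
      (fun y hy => (hdF y ⟨lt_of_lt_of_le hc.1 hy.1, hy.2⟩).hasDerivWithinAt) ε
      (Set.right_mem_Icc.mpr hc.2.le)
    exact this
  -- limit as c → x0 from the right
  have hGlim : Filter.Tendsto (fun y => (y - x0 ε) ^ ((4 + 2*Real.sqrt 3) * ε))
      (nhds (x0 ε)) (nhds 0) := by
    have hs := one_lt_sqrt3
    have hane : ((4 + 2*Real.sqrt 3) * ε) ≠ 0 := by positivity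
    have hc : ContinuousAt (fun t : ℝ => t ^ ((4 + 2*Real.sqrt 3) * ε)) 0 :=
      Real.continuousAt_rpow_const 0 _ (Or.inr (by positivity))
    have h0 : Filter.Tendsto (fun y : ℝ => y - x0 ε) (nhds (x0 ε)) (nhds 0) := by
      have := (continuous_id.sub (continuous_const (y := x0 ε))).tendsto (x0 ε)
      rw [show (0:ℝ) = x0 ε - x0 ε by ring]; exact this
    have := hc.tendsto.comp h0
    simp only [Real.zero_rpow hane] at this; exact this
  have hrest : ContinuousAt (fun y => Real.exp ((4 - 2*Real.sqrt 3) * ε * Real.log (4*ε - x0 ε - y)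
      - 8*ε * Real.log (y + ε) + 12*ε^3/(ε+y)^2 + 12*ε^2/(ε+y)) / (6 * gfun ε ε) * W y)
      (x0 ε) := by
    have hs := one_lt_sqrt3
    have h4e : 4*ε - x0 ε - x0 ε ≠ 0 := by unfold x0; nlinarith
    have hxe : x0 ε + ε ≠ 0 := by positivity
    have hex : ε + x0 ε ≠ 0 := by positivity
    have c1 : ContinuousAt (fun y : ℝ => 4*ε - x0 ε - y) (x0 ε) :=
      (continuous_const.sub continuous_id).continuousAt
    have clog1 : ContinuousAt (fun y : ℝ => Real.log (4*ε - x0 ε - y)) (x0 ε) :=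
      c1.log h4e
    have c2 : ContinuousAt (fun y : ℝ => y + ε) (x0 ε) :=
      (continuous_id.add continuous_const).continuousAt
    have clog2 : ContinuousAt (fun y : ℝ => Real.log (y + ε)) (x0 ε) :=
      c2.log hxe
    have c3 : ContinuousAt (fun y : ℝ => 12*ε^3/(ε+y)^2) (x0 ε) := by
      apply ContinuousAt.div continuousAt_const
        (((continuous_const.add continuous_id).pow 2).continuousAt)
      exact pow_ne_zero 2 hex
    have c4 : ContinuousAt (fun y : ℝ => 12*ε^2/(ε+y)) (x0 ε) := by
      apply ContinuousAt.div continuousAt_const (continuous_const.add continuous_id).continuousAt hex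
    exact ((((((clog1.const_mul _).sub (clog2.const_mul _)).add c3).add c4).rexp).div_const _).mul
      (hWcont (x0 ε) le_rfl hx0l.le)
  have hev : F =ᶠ[nhdsWithin (x0 ε) (Set.Ioi (x0 ε))]
      fun y => (y - x0 ε) ^ ((4 + 2*Real.sqrt 3) * ε) *
        (Real.exp ((4 - 2*Real.sqrt 3) * ε * Real.log (4*ε - x0 ε - y)
          - 8*ε * Real.log (y + ε) + 12*ε^3/(ε+y)^2 + 12*ε^2/(ε+y)) / (6 * gfun ε ε) * W y) := by
    filter_upwards [Ioo_mem_nhdsGT_of_mem ⟨le_refl (x0 ε), hx0l⟩] with y hy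
    simp only [hF]
    unfold pfun
    rw [if_pos hy.2.le, gfun_eq_Gaux hε hy.1 hy.2.le]
    unfold Gaux
    ring
  have hlim0 : Filter.Tendsto F (nhdsWithin (x0 ε) (Set.Ioi (x0 ε))) (nhds 0) := by
    have := ((hGlim.mono_left nhdsWithin_le_nhds).mul
      ((hrest.tendsto).mono_left nhdsWithin_le_nhds)).congr' hev.symm
    simpa using this
  have hlimc : Filter.Tendsto F (nhdsWithin (x0 ε) (Set.Ioi (x0 ε))) (nhds (F ε)) := by
    have hevc : (fun _ : ℝ => F ε) =ᶠ[nhdsWithin (x0 ε) (Set.Ioi (x0 ε))] F := by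
      filter_upwards [Ioo_mem_nhdsGT_of_mem ⟨le_refl (x0 ε), hx0l⟩] with c hc
      exact hconst c hc
    exact Filter.Tendsto.congr' hevc tendsto_const_nhds
  have hFe : F ε = 0 := tendsto_nhds_unique hlimc hlim0
  have hWe : W ε = 0 := by
    have : pfun ε ε * W ε = 0 := hFe
    rw [pfun_eps hε] at this
    linear_combination 6 * this
  simp only [hW] at hWe
  linear_combination -hWe

lemma middle_solve {a b ω : ℝ} (hab : a ≤ b) (hω : 0 < ω) (u u' u'' : ℝ → ℝ)
    (hu : ∀ x ∈ Set.Icc a b, HasDerivAt u (u' x) x)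
    (hu' : ∀ x ∈ Set.Icc a b, HasDerivAt u' (u'' x) x)
    (hmid : ∀ x ∈ Set.Icc a b, u'' x = -(ω^2) * u x) :
    u b = u a * Real.cos (ω*(b-a)) + (u' a/ω) * Real.sin (ω*(b-a)) ∧
      u' b = -(u a) * ω * Real.sin (ω*(b-a)) + u' a * Real.cos (ω*(b-a)) := by
  set w : ℝ → ℝ := fun y => u a * Real.cos (ω*(y-a)) + (u' a/ω) * Real.sin (ω*(y-a)) with hwdef
  set w' : ℝ → ℝ := fun y => -(u a) * ω * Real.sin (ω*(y-a)) + u' a * Real.cos (ω*(y-a)) with hwdef'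
  have hlin : ∀ y : ℝ, HasDerivAt (fun z : ℝ => ω*(z-a)) ω y := by
    intro y
    simpa using ((hasDerivAt_id y).sub_const a).const_mul ω
  have hdw : ∀ y, HasDerivAt w (w' y) y := by
    intro y
    have hc := (Real.hasDerivAt_cos (ω*(y-a))).comp y (hlin y)
    have hs := (Real.hasDerivAt_sin (ω*(y-a))).comp y (hlin y)
    have := ((hc.const_mul (u a)).add (hs.const_mul (u' a / ω)))
    refine this.congr_deriv ?_
    simp only [hwdef']
    field_simp
  have hdw' : ∀ y, HasDerivAt w' (-(ω^2) * w y) y := by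
    intro y
    have hc := (Real.hasDerivAt_cos (ω*(y-a))).comp y (hlin y)
    have hs := (Real.hasDerivAt_sin (ω*(y-a))).comp y (hlin y)
    have := ((hs.const_mul (-(u a) * ω)).add (hc.const_mul (u' a)))
    refine this.congr_deriv ?_
    simp only [hwdef]
    field_simp
    ring
  set Q : ℝ → ℝ := fun y => (u' y - w' y)^2 + ω^2 * (u y - w y)^2 with hQdef
  have hdQ : ∀ y ∈ Set.Icc a b, HasDerivAt Q 0 y := by
    intro y hy
    have d1 : HasDerivAt (fun z => u z - w z) (u' y - w' y) y := (hu y hy).sub (hdw y)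
    have d2 : HasDerivAt (fun z => u' z - w' z) (u'' y - (-(ω^2) * w y)) y :=
      (hu' y hy).sub (hdw' y)
    have hD := ((d2.pow 2).add ((d1.pow 2).const_mul (ω^2)))
    refine hD.congr_deriv ?_
    have hm := hmid y hy
    push_cast
    linear_combination (2*(u' y - w' y)) * hm
  have hQc : ContinuousOn Q (Set.Icc a b) := fun y hy =>
    ((hdQ y hy).continuousAt).continuousWithinAt
  have hconst := constant_of_has_deriv_right_zero hQc
    (fun y hy => (hdQ y (Set.mem_Icc_of_Ico hy)).hasDerivWithinAt)
  have hQa : Q a = 0 := by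
    simp [hQdef, hwdef, hwdef', sub_self, mul_zero, Real.cos_zero, Real.sin_zero]
  have hQb0 : Q b = 0 := (hconst b (Set.right_mem_Icc.mpr hab)).trans hQa
  have hQexp : (u' b - w' b)^2 + ω^2 * (u b - w b)^2 = 0 := hQb0
  have h1 : u b - w b = 0 := by
    have hsq : (u b - w b)^2 = 0 := by
      nlinarith [sq_nonneg (u' b - w' b), sq_nonneg (u b - w b), mul_pos hω hω]
    exact (pow_eq_zero_iff two_ne_zero).mp hsq
  have h2 : u' b - w' b = 0 := by
    have hsq : (u' b - w' b)^2 = 0 := by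
      nlinarith [sq_nonneg (u' b - w' b), sq_nonneg (u b - w b), mul_pos hω hω]
    exact (pow_eq_zero_iff two_ne_zero).mp hsq
  constructor
  · have := sub_eq_zero.mp h1
    simpa [hwdef] using this
  · have := sub_eq_zero.mp h2
    simpa [hwdef'] using this

theorem stmt10 :
    ∃ ε₀ > (0:ℝ), ∀ ε : ℝ, 0 < ε → ε ≤ ε₀ →
      ∀ (lam : ℝ), 0 ≤ lam → ∀ (u u' u'' : ℝ → ℝ),
        (∀ x ∈ Icc (0:ℝ) 1, HasDerivAt u (u' x) x) →
        (∀ x ∈ Icc (0:ℝ) 1, HasDerivAt u' (u'' x) x) →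
        ContinuousOn u'' (Icc 0 1) →
        (∀ x ∈ Icc (0:ℝ) 1, phi2 ε x * u'' x + phi1 ε x * u' x = lam * u x) →
        (∃ x ∈ Icc (0:ℝ) 1, u x ≠ 0) →
        Real.sin (Real.sqrt (6*lam) * (1 - 2*ε)) * ((u' ε)^2 - 6*lam*(u ε)^2) +
          2*Real.sqrt (6*lam) * Real.cos (Real.sqrt (6*lam) * (1 - 2*ε)) * (u ε * u' ε) = 0 := by
  refine ⟨1/4, by norm_num, ?_⟩
  intro ε hε hε4 lam hlam u u' u'' hu hu' hu'' heq hne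
  have hε2 : ε < 1/2 := by linarith
  rcases eq_or_lt_of_le hlam with h0 | hpos
  · rw [← h0]
    norm_num
  · have hω : 0 < Real.sqrt (6*lam) := Real.sqrt_pos.mpr (by linarith)
    set ω := Real.sqrt (6*lam) with hwdef
    have hω2 : ω^2 = 6*lam := Real.sq_sqrt (by linarith)
    have hab : ε ≤ 1 - ε := by linarith
    have hsub : ∀ x ∈ Set.Icc ε (1-ε), x ∈ Set.Icc (0:ℝ) 1 := fun x hx =>
      ⟨by linarith [hx.1], by linarith [hx.2]⟩
    have hmid : ∀ x ∈ Set.Icc ε (1-ε), u'' x = -(ω^2) * u x := by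
      intro x hx
      have h := heq x (hsub x hx)
      rw [phi2_mid hε hx.1 hx.2, phi1_mid hε hx.1 hx.2] at h
      rw [hω2]
      linear_combination -6 * h
    obtain ⟨hub, hub'⟩ := middle_solve hab hω u u' u''
      (fun x hx => hu x (hsub x hx)) (fun x hx => hu' x (hsub x hx)) hmid
    have hS : u ε * u' (1-ε) + u' ε * u (1-ε) = 0 :=
      wronskian_eq_zero hε hε2 lam u u' u'' hu hu' heq
    rw [hub, hub'] at hS
    have harg : ω * ((1-ε) - ε) = ω * (1 - 2*ε) := by ring
    rw [harg] at hS
    have hinv : ω * ω⁻¹ = 1 := mul_inv_cancel₀ hω.ne'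
    rw [div_eq_mul_inv] at hS
    linear_combination ω * hS + (u ε)^2 * Real.sin (ω * (1 - 2*ε)) * hω2 +
      (-(u' ε)^2) * Real.sin (ω * (1 - 2*ε)) * hinv
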